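/- Under the hypotheses of the growth theorem (non-decreasing sequences σ_n = p_n - αu_n, Γ_n = q_n - (-1)^{j-i}αv_n, η = min{σ_2,Γ_2}), the image f(D) of the open unit disk under any f ∈ TH(Φ_i,Ψ_j;α) contains the open disk of radius (1/η)(η - 1 + α + (Γ_1 - η)B_1) centered at 0, where B_1 = f_{z̄}(0). -/

import Mathlib

open Complex

set_option maxHeartbeats 1000000

open Complex

/-- key lemma: along a nonvanishing C¹ path, `γ T = γ 0 * exp (∫ γ'/γ)`. -/
lemma TH_loop_exp (γ γ' : ℝ → ℂ) (hd : ∀ θ, HasDerivAt γ (γ' θ) θ)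
    (hc : Continuous γ') (h0 : ∀ θ, γ θ ≠ 0) (T : ℝ) :
    γ T = γ 0 * Complex.exp (∫ θ in (0:ℝ)..T, γ' θ / γ θ) := by
  have hγc : Continuous γ := by
    rw [continuous_iff_continuousAt]; exact fun t => (hd t).continuousAt
  have hgc : Continuous fun θ => γ' θ / γ θ := hc.div hγc h0
  set g : ℝ → ℂ := fun θ => γ' θ / γ θ with hgdef
  set E : ℝ → ℂ := fun t => ∫ θ in (0:ℝ)..t, g θ with hEdef
  have hE : ∀ t, HasDerivAt E (g t) t := by
    intro t
    exact intervalIntegral.integral_hasDerivAt_right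
      (hgc.intervalIntegrable _ _)
      (hgc.stronglyMeasurable.stronglyMeasurableAtFilter) hgc.continuousAt
  have key : ∀ t, HasDerivAt (fun t => γ t * Complex.exp (-E t)) 0 t := by
    intro t
    have h1 : HasDerivAt (fun t => Complex.exp (-E t)) (Complex.exp (-E t) * (-g t)) t :=
      ((hE t).neg).cexp
    have h2 := (hd t).mul h1
    refine h2.congr_deriv ?_
    have : γ t * g t = γ' t := by
      rw [hgdef, mul_comm]; exact div_mul_cancel₀ _ (h0 t)
    rw [mul_comm (Complex.exp (-E t)) (-g t), ← mul_assoc, mul_neg, this]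
    ring
  have hconst := is_const_of_deriv_eq_zero (𝕜 := ℝ)
    (fun t => (key t).differentiableAt) (fun t => (key t).deriv) T 0
  have hE0 : E 0 = 0 := intervalIntegral.integral_same
  rw [hE0, neg_zero, Complex.exp_zero, mul_one] at hconst
  have hexp : Complex.exp (-E T) ≠ 0 := Complex.exp_ne_zero _
  have : γ T = γ 0 * Complex.exp (E T) := by
    rw [← hconst]
    rw [mul_assoc, ← Complex.exp_add, neg_add_cancel, Complex.exp_zero, mul_one]
  exact this

/-- homotopy invariance of the winding integral. -/
lemma TH_winding_const (Φ Φ' : ℝ → ℝ → ℂ)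
    (hd : ∀ s θ, HasDerivAt (Φ s) (Φ' s θ) θ)
    (hΦ : Continuous (Function.uncurry Φ)) (hΦ' : Continuous (Function.uncurry Φ'))
    (h0 : ∀ s θ, Φ s θ ≠ 0) (hper : ∀ s, Φ s (2 * Real.pi) = Φ s 0) :
    (∫ θ in (0:ℝ)..(2 * Real.pi), Φ' 0 θ / Φ 0 θ)
      = ∫ θ in (0:ℝ)..(2 * Real.pi), Φ' 1 θ / Φ 1 θ := by
  set I : ℝ → ℂ := fun s => ∫ θ in (0:ℝ)..(2 * Real.pi), Φ' s θ / Φ s θ with hIdef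
  have hIc : Continuous I := by
    apply intervalIntegral.continuous_parametric_intervalIntegral_of_continuous'
    exact hΦ'.div hΦ (fun p => h0 p.1 p.2)
  have hint : ∀ s, ∃ k : ℤ, I s = k * (2 * Real.pi * Complex.I) := by
    intro s
    have hcd : Continuous (Φ' s) := hΦ'.comp (Continuous.prodMk_right s)
    have hle := TH_loop_exp (Φ s) (Φ' s) (hd s) hcd (h0 s) (2 * Real.pi)
    rw [hper s] at hle
    have hexp : Complex.exp (I s) = 1 := by
      have h00 := h0 s 0
      have h1 : Φ s 0 * Complex.exp (I s) = Φ s 0 * 1 := by rw [mul_one]; exact hle.symm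
      exact mul_left_cancel₀ h00 h1
    obtain ⟨k, hk⟩ := Complex.exp_eq_one_iff.mp hexp
    exact ⟨k, hk⟩
  obtain ⟨k0, h0'⟩ := hint 0
  obtain ⟨k1, h1'⟩ := hint 1
  by_contra hne
  have hkne : k0 ≠ k1 := by
    rintro rfl
    exact hne (h0'.trans h1'.symm)
  -- imaginary parts
  have him : ∀ (k : ℤ), ((k : ℂ) * (2 * Real.pi * Complex.I)).im = 2 * Real.pi * k := by
    intro k; simp [Complex.mul_im]; ring
  have hJc : ContinuousOn (fun s => (I s).im) (Set.uIcc (0:ℝ) 1) :=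
    (Complex.continuous_im.comp hIc).continuousOn
  have hiv := intermediate_value_uIcc hJc
  have hπ : (0:ℝ) < Real.pi := Real.pi_pos
  -- pick the half-integer multiple of 2π between the two values
  set y : ℝ := if k0 < k1 then 2 * Real.pi * k0 + Real.pi else 2 * Real.pi * k0 - Real.pi with hydef
  have hymem : y ∈ Set.uIcc ((I 0).im) ((I 1).im) := by
    rw [h0', h1', him, him]
    rcases lt_or_gt_of_ne hkne with h | h
    · have hk1 : (k0 : ℝ) + 1 ≤ k1 := by exact_mod_cast h
      rw [hydef, if_pos h]
      rw [Set.mem_uIcc]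
      left
      constructor <;> nlinarith
    · have hk1 : (k1 : ℝ) + 1 ≤ k0 := by exact_mod_cast h
      rw [hydef, if_neg (not_lt.mpr h.le)]
      rw [Set.mem_uIcc]
      right
      constructor <;> nlinarith
  obtain ⟨s, _, hs⟩ := hiv hymem
  obtain ⟨k, hk⟩ := hint s
  have hs : (I s).im = y := hs
  rw [hk, him] at hs
  -- 2π k = 2π k0 ± π : parity contradiction
  rcases eq_or_ne (if k0 < k1 then (1:ℝ) else -1) 1 with h | h
  all_goals {
    have : (2 * (k:ℝ)) * Real.pi = (2 * k0 + (if k0 < k1 then (1:ℝ) else -1)) * Real.pi := by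
      rw [hydef] at hs
      split_ifs at hs ⊢ <;> nlinarith
    have h2 : (2 * (k:ℝ)) = 2 * k0 + (if k0 < k1 then (1:ℝ) else -1) :=
      mul_right_cancel₀ (ne_of_gt hπ) this
    split_ifs at h2 with hcc
    · have : (2*k : ℝ) = ((2*k0 + 1 : ℤ) : ℝ) := by push_cast; linarith
      have := (Int.cast_injective (α := ℝ)) (by push_cast at this ⊢; linarith : ((2*k :ℤ):ℝ) = ((2*k0+1 : ℤ):ℝ))
      omega
    · have := (Int.cast_injective (α := ℝ)) (by push_cast; linarith : ((2*k :ℤ):ℝ) = ((2*k0-1 : ℤ):ℝ))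
      omega
  }

lemma TH_summable_aux (ρ : ℝ) (hρ0 : 0 ≤ ρ) (hρ1 : ρ < 1) (k : ℕ) (C : ℝ) :
    Summable (fun n : ℕ => C * (((n : ℝ) + k) * ρ ^ n)) := by
  have hρn : ‖ρ‖ < 1 := by rwa [Real.norm_eq_abs, _root_.abs_of_nonneg hρ0]
  have h1 : Summable (fun n : ℕ => (n : ℝ) * ρ ^ n) := by
    have := summable_pow_mul_geometric_of_norm_lt_one 1 hρn
    simpa using this
  have h2 : Summable (fun n : ℕ => (k : ℝ) * ρ ^ n) :=
    (summable_geometric_of_norm_lt_one hρn).mul_left _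
  have := (h1.add h2).mul_left C
  refine this.congr fun n => ?_
  ring

lemma TH_term_norm_le (c C ρ : ℝ) (hc : 0 ≤ c) (hC : c ≤ C) (hρ0 : 0 ≤ ρ) (hρ1 : ρ ≤ 1)
    (n k : ℕ) (hk : 1 ≤ k) (z v : ℂ) (hz : ‖z‖ ≤ ρ) (hv : ‖v‖ ≤ 1) :
    ‖(c : ℂ) * (((n + k : ℕ) : ℂ) * z ^ (n + k - 1) * v)‖ ≤ C * (((n : ℝ) + k) * ρ ^ n) := by
  have h1 : ‖z ^ (n + k - 1)‖ ≤ ρ ^ n := by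
    rw [norm_pow]
    calc ‖z‖ ^ (n + k - 1) ≤ ρ ^ (n + k - 1) := by
          exact pow_le_pow_left₀ (norm_nonneg _) hz _
      _ ≤ ρ ^ n := pow_le_pow_of_le_one hρ0 hρ1 (by omega)
  have hC0 : 0 ≤ C := hc.trans hC
  simp only [norm_mul, Complex.norm_real, Real.norm_eq_abs, _root_.abs_of_nonneg hc,
    Complex.norm_natCast]
  have : ((n + k : ℕ) : ℝ) = (n : ℝ) + k := by push_cast; ring
  rw [this]
  have hnk : (0:ℝ) ≤ (n : ℝ) + k := by positivity
  calc c * (((n:ℝ) + k) * ‖z ^ (n+k-1)‖ * ‖v‖)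
      ≤ C * (((n:ℝ) + k) * ρ ^ n * 1) := by
        apply mul_le_mul hC _ (by positivity) hC0
        exact mul_le_mul (mul_le_mul le_rfl h1 (norm_nonneg _) hnk) hv (norm_nonneg _)
          (by positivity)
    _ = C * (((n:ℝ) + k) * ρ ^ n) := by ring

lemma TH_series_hasDerivAt (c : ℕ → ℝ) (hc : ∀ n, 0 ≤ c n) (hsc : Summable c)
    (ρ : ℝ) (hρ0 : 0 ≤ ρ) (hρ1 : ρ < 1) (k : ℕ) (hk : 1 ≤ k)
    (z z' : ℝ → ℂ) (hz : ∀ θ, HasDerivAt z (z' θ) θ)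
    (hzb : ∀ θ, ‖z θ‖ ≤ ρ) (hz'b : ∀ θ, ‖z' θ‖ ≤ 1) (θ : ℝ) :
    HasDerivAt (fun t => ∑' n : ℕ, (c n : ℂ) * z t ^ (n + k))
      (∑' n : ℕ, (c n : ℂ) * (((n + k : ℕ) : ℂ) * z θ ^ (n + k - 1) * z' θ)) θ := by
  have hC : ∀ n, c n ≤ ∑' m, c m := fun n => hsc.le_tsum n (fun m _ => hc m)
  refine hasDerivAt_tsum (u := fun n : ℕ => (∑' m, c m) * (((n : ℝ) + k) * ρ ^ n))
    (g := fun n t => (c n : ℂ) * z t ^ (n + k))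
    (g' := fun n t => (c n : ℂ) * (((n + k : ℕ) : ℂ) * z t ^ (n + k - 1) * z' t))
    (y₀ := θ) (TH_summable_aux ρ hρ0 hρ1 k _) (fun n t => ?_) (fun n t => ?_) ?_ θ
  · have hp := HasDerivAt.scomp (h := z) (x := t) (hasDerivAt_pow (n + k) (z t)) (hz t)
    have hp2 := HasDerivAt.const_mul (c n : ℂ) hp
    refine hp2.congr_deriv ?_
    simp only [smul_eq_mul]
    ring
  · exact TH_term_norm_le _ _ _ (hc n) (hC n) hρ0 hρ1.le n k hk _ _ (hzb t) (hz'b t)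
  · apply Summable.of_norm
    apply Summable.of_nonneg_of_le (fun n => norm_nonneg _) _ hsc
    intro n
    rw [norm_mul, Complex.norm_real, Real.norm_eq_abs, _root_.abs_of_nonneg (hc n), norm_pow]
    calc c n * ‖z θ‖ ^ (n + k) ≤ c n * 1 ^ (n + k) := by
          apply mul_le_mul_of_nonneg_left _ (hc n)
          exact pow_le_pow_left₀ (norm_nonneg _) ((hzb θ).trans hρ1.le) _
      _ = c n := by rw [one_pow, mul_one]

lemma TH_cont_tsum0 (c : ℕ → ℝ) (hc : ∀ n, 0 ≤ c n) (hsc : Summable c) (k : ℕ)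
    (Z : ℝ × ℝ → ℂ) (hZ : Continuous Z) (hZb : ∀ p, ‖Z p‖ ≤ 1) :
    Continuous fun p => ∑' n : ℕ, (c n : ℂ) * Z p ^ (n + k) := by
  apply continuous_tsum (fun n => continuous_const.mul (hZ.pow _)) hsc
  intro n p
  show ‖(c n : ℂ) * Z p ^ (n + k)‖ ≤ c n
  rw [norm_mul, Complex.norm_real, Real.norm_eq_abs, _root_.abs_of_nonneg (hc n), norm_pow]
  calc c n * ‖Z p‖ ^ (n + k) ≤ c n * 1 ^ (n + k) := by
        apply mul_le_mul_of_nonneg_left _ (hc n)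
        exact pow_le_pow_left₀ (norm_nonneg _) (hZb p) _
    _ = c n := by rw [one_pow, mul_one]

lemma TH_cont_tsum1 (c : ℕ → ℝ) (hc : ∀ n, 0 ≤ c n) (hsc : Summable c)
    (ρ : ℝ) (hρ0 : 0 ≤ ρ) (hρ1 : ρ < 1) (k : ℕ) (hk : 1 ≤ k)
    (Z W : ℝ × ℝ → ℂ) (hZ : Continuous Z) (hW : Continuous W)
    (hZb : ∀ p, ‖Z p‖ ≤ ρ) (hWb : ∀ p, ‖W p‖ ≤ 1) :
    Continuous fun p => ∑' n : ℕ, (c n : ℂ) * (((n + k : ℕ) : ℂ) * Z p ^ (n + k - 1) * W p) := by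
  have hC : ∀ n, c n ≤ ∑' m, c m := fun n => hsc.le_tsum n (fun m _ => hc m)
  apply continuous_tsum
    (fun n => continuous_const.mul ((continuous_const.mul (hZ.pow _)).mul hW))
    (TH_summable_aux ρ hρ0 hρ1 k _)
  intro n p
  exact TH_term_norm_le _ _ _ (hc n) (hC n) hρ0 hρ1.le n k hk _ _ (hZb p) (hWb p)

noncomputable def THz (ρ s θ : ℝ) : ℂ :=
  (max 0 (min s 1) : ℝ) * (ρ : ℝ) * Complex.exp ((θ : ℝ) * Complex.I)

noncomputable def THphi (a b : ℕ → ℝ) (w : ℂ) (ρ s θ : ℝ) : ℂ :=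
  THz ρ s θ - (∑' n : ℕ, (a n : ℂ) * THz ρ s θ ^ (n + 2))
    + starRingEnd ℂ (∑' n : ℕ, (b n : ℂ) * THz ρ s θ ^ (n + 1)) - w

noncomputable def THphi' (a b : ℕ → ℝ) (ρ s θ : ℝ) : ℂ :=
  Complex.I * THz ρ s θ
    - (∑' n : ℕ, (a n : ℂ) * (((n + 2 : ℕ) : ℂ) * THz ρ s θ ^ (n + 2 - 1) * (Complex.I * THz ρ s θ)))
    + starRingEnd ℂ
      (∑' n : ℕ, (b n : ℂ) * (((n + 1 : ℕ) : ℂ) * THz ρ s θ ^ (n + 1 - 1) * (Complex.I * THz ρ s θ)))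

lemma THz_norm (ρ s θ : ℝ) (hρ : 0 ≤ ρ) : ‖THz ρ s θ‖ = max 0 (min s 1) * ρ := by
  rw [THz, norm_mul, norm_mul, Complex.norm_exp_ofReal_mul_I, mul_one, Complex.norm_real,
    Complex.norm_real, Real.norm_eq_abs, Real.norm_eq_abs, _root_.abs_of_nonneg (le_max_left _ _),
    _root_.abs_of_nonneg hρ]

lemma THz_norm_le (ρ s θ : ℝ) (hρ : 0 ≤ ρ) : ‖THz ρ s θ‖ ≤ ρ := by
  rw [THz_norm ρ s θ hρ]
  have h1 : max 0 (min s 1) ≤ 1 := by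
    apply max_le (by norm_num)
    exact (min_le_right _ _)
  nlinarith [hρ]

lemma THz_hasDerivAt (ρ s : ℝ) (θ : ℝ) :
    HasDerivAt (THz ρ s) (Complex.I * THz ρ s θ) θ := by
  have hexp : HasDerivAt (fun t : ℝ => Complex.exp ((t : ℝ) * Complex.I))
      (Complex.I * Complex.exp ((θ : ℝ) * Complex.I)) θ := by
    have h1 : HasDerivAt (fun w : ℂ => Complex.exp (w * Complex.I))
        (Complex.exp ((θ : ℝ) * Complex.I) * (1 * Complex.I)) ((θ : ℝ) : ℂ) :=
      ((hasDerivAt_id _).mul_const Complex.I).cexp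
    have := h1.comp_ofReal
    convert this using 1
    ring
  have := hexp.const_mul ((max 0 (min s 1) : ℝ) * (ρ : ℝ) : ℂ)
  refine this.congr_deriv ?_
  rw [THz]; ring

lemma THz_continuous (ρ : ℝ) : Continuous (fun p : ℝ × ℝ => THz ρ p.1 p.2) := by
  unfold THz
  apply Continuous.mul
  · apply Continuous.mul
    · exact Complex.continuous_ofReal.comp
        ((continuous_const.max ((continuous_fst).min continuous_const)))
    · exact continuous_const
  · exact Complex.continuous_exp.comp ((Complex.continuous_ofReal.comp continuous_snd).mul
      continuous_const)

lemma THz_periodic (ρ s : ℝ) : THz ρ s (2 * Real.pi) = THz ρ s 0 := by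
  unfold THz
  congr 1
  push_cast
  rw [Complex.exp_two_pi_mul_I]
  norm_num

lemma THphi_hasDerivAt (a b : ℕ → ℝ) (ha : ∀ n, 0 ≤ a n) (hb : ∀ n, 0 ≤ b n)
    (hsa : Summable a) (hsb : Summable b) (w : ℂ) (ρ : ℝ) (hρ0 : 0 ≤ ρ) (hρ1 : ρ < 1)
    (s θ : ℝ) : HasDerivAt (THphi a b w ρ s) (THphi' a b ρ s θ) θ := by
  have hzb : ∀ t, ‖THz ρ s t‖ ≤ ρ := fun t => THz_norm_le ρ s t hρ0
  have hz'b : ∀ t, ‖Complex.I * THz ρ s t‖ ≤ 1 := by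
    intro t
    rw [norm_mul, Complex.norm_I, one_mul]
    exact (hzb t).trans hρ1.le
  have hA := TH_series_hasDerivAt a ha hsa ρ hρ0 hρ1 2 (by norm_num) (THz ρ s)
    (fun t => Complex.I * THz ρ s t) (THz_hasDerivAt ρ s) hzb hz'b θ
  have hB := TH_series_hasDerivAt b hb hsb ρ hρ0 hρ1 1 (by norm_num) (THz ρ s)
    (fun t => Complex.I * THz ρ s t) (THz_hasDerivAt ρ s) hzb hz'b θ
  have hBst := hB.star
  exact (((THz_hasDerivAt ρ s θ).sub hA).add hBst).sub_const w

lemma THphi_continuous (a b : ℕ → ℝ) (ha : ∀ n, 0 ≤ a n) (hb : ∀ n, 0 ≤ b n)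
    (hsa : Summable a) (hsb : Summable b) (w : ℂ) (ρ : ℝ) (hρ0 : 0 ≤ ρ) (hρ1 : ρ < 1) :
    Continuous (Function.uncurry (THphi a b w ρ)) := by
  have hZb : ∀ p : ℝ × ℝ, ‖THz ρ p.1 p.2‖ ≤ 1 :=
    fun p => (THz_norm_le ρ p.1 p.2 hρ0).trans hρ1.le
  apply Continuous.sub _ continuous_const
  apply Continuous.add
  · exact (THz_continuous ρ).sub (TH_cont_tsum0 a ha hsa 2 _ (THz_continuous ρ) hZb)
  · exact continuous_star.comp (TH_cont_tsum0 b hb hsb 1 _ (THz_continuous ρ) hZb)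

lemma THphi'_continuous (a b : ℕ → ℝ) (ha : ∀ n, 0 ≤ a n) (hb : ∀ n, 0 ≤ b n)
    (hsa : Summable a) (hsb : Summable b) (ρ : ℝ) (hρ0 : 0 ≤ ρ) (hρ1 : ρ < 1) :
    Continuous (Function.uncurry (THphi' a b ρ)) := by
  have hZb : ∀ p : ℝ × ℝ, ‖THz ρ p.1 p.2‖ ≤ ρ := fun p => THz_norm_le ρ p.1 p.2 hρ0
  have hWb : ∀ p : ℝ × ℝ, ‖Complex.I * THz ρ p.1 p.2‖ ≤ 1 := by
    intro p
    rw [norm_mul, Complex.norm_I, one_mul]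
    exact (hZb p).trans hρ1.le
  have hW : Continuous fun p : ℝ × ℝ => Complex.I * THz ρ p.1 p.2 :=
    continuous_const.mul (THz_continuous ρ)
  apply Continuous.add
  · exact (continuous_const.mul (THz_continuous ρ)).sub
      (TH_cont_tsum1 a ha hsa ρ hρ0 hρ1 2 (by norm_num) _ _ (THz_continuous ρ) hW hZb hWb)
  · exact continuous_star.comp
      (TH_cont_tsum1 b hb hsb ρ hρ0 hρ1 1 (by norm_num) _ _ (THz_continuous ρ) hW hZb hWb)

lemma THphi_periodic (a b : ℕ → ℝ) (w : ℂ) (ρ s : ℝ) :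
    THphi a b w ρ s (2 * Real.pi) = THphi a b w ρ s 0 := by
  unfold THphi
  rw [THz_periodic]

lemma THphi_zero (a b : ℕ → ℝ) (w : ℂ) (ρ θ : ℝ) : THphi a b w ρ 0 θ = -w := by
  have hz : THz ρ 0 θ = 0 := by
    unfold THz
    norm_num
  unfold THphi
  rw [hz]
  simp

lemma THphi'_zero (a b : ℕ → ℝ) (ρ θ : ℝ) : THphi' a b ρ 0 θ = 0 := by
  have hz : THz ρ 0 θ = 0 := by
    unfold THz
    norm_num
  unfold THphi'
  rw [hz]
  simp

lemma TH_tsum_a_bound (a : ℕ → ℝ) (ha : ∀ n, 0 ≤ a n) (hsa : Summable a)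
    (ρ : ℝ) (hρ0 : 0 ≤ ρ) (hρ1 : ρ ≤ 1) (z : ℂ) (hz : ‖z‖ ≤ ρ) :
    ‖∑' n : ℕ, (a n : ℂ) * z ^ (n + 2)‖ ≤ (∑' n, a n) * ρ ^ 2 := by
  have hterm : ∀ n : ℕ, ‖(a n : ℂ) * z ^ (n + 2)‖ ≤ a n * ρ ^ 2 := by
    intro n
    rw [norm_mul, Complex.norm_real, Real.norm_eq_abs, _root_.abs_of_nonneg (ha n), norm_pow]
    have h1 : ‖z‖ ^ (n + 2) ≤ ρ ^ (n + 2) := pow_le_pow_left₀ (norm_nonneg _) hz _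
    have h2 : ρ ^ (n + 2) ≤ ρ ^ 2 := pow_le_pow_of_le_one hρ0 hρ1 (by omega)
    exact mul_le_mul_of_nonneg_left (h1.trans h2) (ha n)
  have hsn : Summable fun n : ℕ => ‖(a n : ℂ) * z ^ (n + 2)‖ :=
    Summable.of_nonneg_of_le (fun n => norm_nonneg _) hterm (hsa.mul_right _)
  calc ‖∑' n : ℕ, (a n : ℂ) * z ^ (n + 2)‖ ≤ ∑' n, ‖(a n : ℂ) * z ^ (n + 2)‖ :=
        norm_tsum_le_tsum_norm hsn
    _ ≤ ∑' n, a n * ρ ^ 2 := Summable.tsum_le_tsum hterm hsn (hsa.mul_right _)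
    _ = (∑' n, a n) * ρ ^ 2 := tsum_mul_right

lemma TH_tsum_b_bound (b : ℕ → ℝ) (hb : ∀ n, 0 ≤ b n) (hsb : Summable b)
    (ρ : ℝ) (hρ0 : 0 ≤ ρ) (hρ1 : ρ ≤ 1) (z : ℂ) (hz : ‖z‖ ≤ ρ) :
    ‖∑' n : ℕ, (b n : ℂ) * z ^ (n + 1)‖ ≤ b 0 * ρ + (∑' n, b (n + 1)) * ρ ^ 2 := by
  have hterm : ∀ n : ℕ, ‖(b n : ℂ) * z ^ (n + 1)‖ ≤ b n * ρ ^ (n + 1) := by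
    intro n
    rw [norm_mul, Complex.norm_real, Real.norm_eq_abs, _root_.abs_of_nonneg (hb n), norm_pow]
    exact mul_le_mul_of_nonneg_left (pow_le_pow_left₀ (norm_nonneg _) hz _) (hb n)
  have hsmaj : Summable fun n : ℕ => b n * ρ ^ (n + 1) := by
    apply Summable.of_nonneg_of_le (fun n => mul_nonneg (hb n) (pow_nonneg hρ0 _)) _ hsb
    intro n
    calc b n * ρ ^ (n + 1) ≤ b n * 1 := by
          apply mul_le_mul_of_nonneg_left _ (hb n)
          exact pow_le_one₀ hρ0 hρ1
      _ = b n := mul_one _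
  have hsn : Summable fun n : ℕ => ‖(b n : ℂ) * z ^ (n + 1)‖ :=
    Summable.of_nonneg_of_le (fun n => norm_nonneg _) hterm hsmaj
  have hsmaj' : Summable fun n : ℕ => b (n + 1) * ρ ^ (n + 2) := by
    exact (summable_nat_add_iff 1).mpr hsmaj
  have step1 : ‖∑' n : ℕ, (b n : ℂ) * z ^ (n + 1)‖ ≤ ∑' n, b n * ρ ^ (n + 1) :=
    (norm_tsum_le_tsum_norm hsn).trans (Summable.tsum_le_tsum hterm hsn hsmaj)
  have step2 : (∑' n, b n * ρ ^ (n + 1)) = b 0 * ρ + ∑' n, b (n + 1) * ρ ^ (n + 2) := by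
    rw [Summable.tsum_eq_zero_add hsmaj]
    norm_num
  have step3 : (∑' n, b (n + 1) * ρ ^ (n + 2)) ≤ (∑' n, b (n + 1)) * ρ ^ 2 := by
    rw [← tsum_mul_right]
    apply Summable.tsum_le_tsum _ hsmaj' (((summable_nat_add_iff 1).mpr hsb).mul_right _)
    intro n
    have h2 : ρ ^ (n + 2) ≤ ρ ^ 2 := pow_le_pow_of_le_one hρ0 hρ1 (by omega)
    exact mul_le_mul_of_nonneg_left h2 (hb (n + 1))
  calc ‖∑' n : ℕ, (b n : ℂ) * z ^ (n + 1)‖ ≤ b 0 * ρ + ∑' n, b (n + 1) * ρ ^ (n + 2) := by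
        rw [← step2]; exact step1
    _ ≤ b 0 * ρ + (∑' n, b (n + 1)) * ρ ^ 2 := by linarith

lemma TH_covering_aux (a b : ℕ → ℝ) (ha : ∀ n, 0 ≤ a n) (hb : ∀ n, 0 ≤ b n)
    (hsa : Summable a) (hsb : Summable b)
    (w : ℂ) (ρ : ℝ) (hρ0 : 0 < ρ) (hρ1 : ρ < 1)
    (hgap : ‖w‖ + (∑' n, a n) * ρ ^ 2 + b 0 * ρ + (∑' n, b (n + 1)) * ρ ^ 2 < ρ)
    (hne : ∀ z : ℂ, ‖z‖ < 1 →
      z - (∑' n : ℕ, (a n : ℂ) * z ^ (n + 2))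
        + starRingEnd ℂ (∑' n : ℕ, (b n : ℂ) * z ^ (n + 1)) ≠ w) :
    False := by
  have h0φ : ∀ s θ, THphi a b w ρ s θ ≠ 0 := by
    intro s θ
    have hlt : ‖THz ρ s θ‖ < 1 := (THz_norm_le ρ s θ hρ0.le).trans_lt hρ1
    have := hne (THz ρ s θ) hlt
    unfold THphi
    exact sub_ne_zero.mpr this
  have key1 := TH_winding_const (THphi a b w ρ) (THphi' a b ρ)
    (fun s θ => THphi_hasDerivAt a b ha hb hsa hsb w ρ hρ0.le hρ1 s θ)
    (THphi_continuous a b ha hb hsa hsb w ρ hρ0.le hρ1)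
    (THphi'_continuous a b ha hb hsa hsb ρ hρ0.le hρ1)
    h0φ (fun s => THphi_periodic a b w ρ s)
  have hI10 : (∫ θ in (0:ℝ)..(2 * Real.pi), THphi' a b ρ 0 θ / THphi a b w ρ 0 θ) = 0 := by
    rw [intervalIntegral.integral_congr (g := fun _ => (0:ℂ))
      (fun θ _ => by rw [THphi'_zero, zero_div])]
    simp
  -- the straight-line homotopy from the loop at radius ρ to the circle
  set c : ℝ → ℂ := fun s => 1 - ((max 0 (min s 1) : ℝ) : ℂ) with hcdef
  set ψ : ℝ → ℝ → ℂ := fun s θ =>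
    THz ρ 1 θ + c s * (THphi a b w ρ 1 θ - THz ρ 1 θ) with hψdef
  set ψ' : ℝ → ℝ → ℂ := fun s θ =>
    Complex.I * THz ρ 1 θ + c s * (THphi' a b ρ 1 θ - Complex.I * THz ρ 1 θ) with hψ'def
  have hψd : ∀ s θ, HasDerivAt (ψ s) (ψ' s θ) θ := by
    intro s θ
    exact (THz_hasDerivAt ρ 1 θ).add
      (((THphi_hasDerivAt a b ha hb hsa hsb w ρ hρ0.le hρ1 1 θ).sub
        (THz_hasDerivAt ρ 1 θ)).const_mul _)
  have hccont : Continuous c := by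
    rw [hcdef]
    exact continuous_const.sub (Complex.continuous_ofReal.comp
      (continuous_const.max (continuous_id.min continuous_const)))
  have hone : Continuous fun p : ℝ × ℝ => ((1 : ℝ), p.2) := continuous_const.prodMk continuous_snd
  have hψc : Continuous (Function.uncurry ψ) := by
    apply Continuous.add ((THz_continuous ρ).comp hone)
    exact (hccont.comp continuous_fst).mul
      (((THphi_continuous a b ha hb hsa hsb w ρ hρ0.le hρ1).comp hone).sub
        ((THz_continuous ρ).comp hone))
  have hψ'c : Continuous (Function.uncurry ψ') := by
    apply Continuous.add (continuous_const.mul ((THz_continuous ρ).comp hone))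
    exact (hccont.comp continuous_fst).mul
      (((THphi'_continuous a b ha hb hsa hsb ρ hρ0.le hρ1).comp hone).sub
        (continuous_const.mul ((THz_continuous ρ).comp hone)))
  have hznorm : ∀ θ, ‖THz ρ 1 θ‖ = ρ := by
    intro θ
    rw [THz_norm _ _ _ hρ0.le]
    norm_num
  have hcnorm : ∀ s, ‖c s‖ ≤ 1 := by
    intro s
    have h1 : (0:ℝ) ≤ max 0 (min s 1) := le_max_left _ _
    have h2 : max 0 (min s 1) ≤ 1 := max_le zero_le_one (min_le_right _ _)
    have h3 : c s = (((1 - max 0 (min s 1) : ℝ)) : ℂ) := by rw [hcdef]; push_cast; ring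
    rw [h3, Complex.norm_real, Real.norm_eq_abs, _root_.abs_of_nonneg (by linarith)]
    linarith
  have hdiff : ∀ θ, ‖THphi a b w ρ 1 θ - THz ρ 1 θ‖ < ρ := by
    intro θ
    have heq : THphi a b w ρ 1 θ - THz ρ 1 θ
        = starRingEnd ℂ (∑' n : ℕ, (b n : ℂ) * THz ρ 1 θ ^ (n + 1))
          - (∑' n : ℕ, (a n : ℂ) * THz ρ 1 θ ^ (n + 2)) - w := by
      unfold THphi; ring
    rw [heq]
    have hza : ‖THz ρ 1 θ‖ ≤ ρ := (hznorm θ).le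
    have h1 := TH_tsum_a_bound a ha hsa ρ hρ0.le hρ1.le _ hza
    have h2 := TH_tsum_b_bound b hb hsb ρ hρ0.le hρ1.le _ hza
    calc ‖starRingEnd ℂ (∑' n : ℕ, (b n : ℂ) * THz ρ 1 θ ^ (n + 1))
          - (∑' n : ℕ, (a n : ℂ) * THz ρ 1 θ ^ (n + 2)) - w‖
        ≤ ‖starRingEnd ℂ (∑' n : ℕ, (b n : ℂ) * THz ρ 1 θ ^ (n + 1))‖
          + ‖∑' n : ℕ, (a n : ℂ) * THz ρ 1 θ ^ (n + 2)‖ + ‖w‖ :=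
          (norm_sub_le _ _).trans (add_le_add_left (norm_sub_le _ _) _)
      _ = ‖∑' n : ℕ, (b n : ℂ) * THz ρ 1 θ ^ (n + 1)‖
          + ‖∑' n : ℕ, (a n : ℂ) * THz ρ 1 θ ^ (n + 2)‖ + ‖w‖ := by
          rw [RCLike.norm_conj]
      _ < ρ := by linarith
  have h0ψ : ∀ s θ, ψ s θ ≠ 0 := by
    intro s θ hzero
    have heq : THz ρ 1 θ = -(c s * (THphi a b w ρ 1 θ - THz ρ 1 θ)) := by
      rw [hψdef] at hzero
      linear_combination hzero
    have hn := congrArg norm heq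
    rw [hznorm, norm_neg, norm_mul] at hn
    have hle : ‖c s‖ * ‖THphi a b w ρ 1 θ - THz ρ 1 θ‖ < 1 * ρ := by
      apply mul_lt_mul' (hcnorm s) (hdiff θ) (norm_nonneg _) one_pos
    rw [one_mul] at hle
    linarith [hn.le, hn.ge]
  have hψper : ∀ s, ψ s (2 * Real.pi) = ψ s 0 := by
    intro s
    rw [hψdef]
    simp only [THz_periodic, THphi_periodic]
  have key2 := TH_winding_const ψ ψ' hψd hψc hψ'c h0ψ hψper
  have hψ0 : ∀ θ, ψ 0 θ = THphi a b w ρ 1 θ := by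
    intro θ
    rw [hψdef, hcdef]
    norm_num
  have hψ'0 : ∀ θ, ψ' 0 θ = THphi' a b ρ 1 θ := by
    intro θ
    rw [hψ'def, hcdef]
    norm_num
  have hI20 : (∫ θ in (0:ℝ)..(2 * Real.pi), ψ' 0 θ / ψ 0 θ)
      = ∫ θ in (0:ℝ)..(2 * Real.pi), THphi' a b ρ 1 θ / THphi a b w ρ 1 θ :=
    intervalIntegral.integral_congr (fun θ _ => by rw [hψ0, hψ'0])
  have hI21 : (∫ θ in (0:ℝ)..(2 * Real.pi), ψ' 1 θ / ψ 1 θ)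
      = (2 * Real.pi) • Complex.I := by
    have hc1 : c 1 = 0 := by rw [hcdef]; norm_num
    have hint : ∀ θ : ℝ, ψ' 1 θ / ψ 1 θ = Complex.I := by
      intro θ
      have hz0 : THz ρ 1 θ ≠ 0 := by
        intro h
        have := hznorm θ
        rw [h, norm_zero] at this
        linarith
      simp only [hψdef, hψ'def, hc1, zero_mul, add_zero]
      rw [mul_div_assoc, div_self hz0, mul_one]
    rw [intervalIntegral.integral_congr (g := fun _ => Complex.I) (fun θ _ => hint θ)]
    rw [intervalIntegral.integral_const]
    rw [sub_zero]
  rw [hI10] at key1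
  rw [hI20, ← key1] at key2
  rw [hI21] at key2
  have him := congrArg Complex.im key2
  simp only [Complex.zero_im, Complex.real_smul, Complex.mul_im, Complex.ofReal_re,
    Complex.I_im, Complex.ofReal_im, Complex.I_re, mul_zero, mul_one, zero_mul, add_zero] at him
  have hπ : Real.pi ≠ 0 := Real.pi_ne_zero
  push_cast at him
  nlinarith [Real.pi_pos]


/-- Covering theorem for `TH(Φ_i, Ψ_j; α)`: under the hypotheses of the growth
theorem, `f(D)` contains the open disk of radius
`(1/η)(η - 1 + α + (Γ_1 - η) B_1)` centered at the origin, where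
`η = min{σ_2, Γ_2}`, `σ_n = p_n - α u_n`, `Γ_n = q_n - ε α v_n`, `ε = (-1)^{j-i}`. -/
theorem TH_covering
    (α ε : ℝ) (hα : 0 ≤ α) (hα1 : α < 1) (hε : ε = 1 ∨ ε = -1)
    (p u q v A B : ℕ → ℝ)
    (hpu : ∀ n, 2 ≤ n → 0 ≤ u n ∧ u n < p n)
    (hqv : ∀ n, 1 ≤ n → 0 ≤ v n ∧ v n < q n)
    (hA : ∀ n, 2 ≤ n → 0 ≤ A n) (hB : ∀ n, 1 ≤ n → 0 ≤ B n)
    (hSA : Summable fun n : ℕ => (p (n + 2) - α * u (n + 2)) / (1 - α) * A (n + 2))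
    (hSB : Summable fun n : ℕ => (q (n + 1) - ε * α * v (n + 1)) / (1 - α) * B (n + 1))
    (hsum : (∑' n : ℕ, (p (n + 2) - α * u (n + 2)) / (1 - α) * A (n + 2))
        + (∑' n : ℕ, (q (n + 1) - ε * α * v (n + 1)) / (1 - α) * B (n + 1)) ≤ 1)
    (hσ : ∀ n, 2 ≤ n → p n - α * u n ≤ p (n + 1) - α * u (n + 1))
    (hΓ : ∀ n, 1 ≤ n → q n - ε * α * v n ≤ q (n + 1) - ε * α * v (n + 1)) :
    ∀ w : ℂ, ‖w‖ < (min (p 2 - α * u 2) (q 2 - ε * α * v 2) - 1 + α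
        + ((q 1 - ε * α * v 1) - min (p 2 - α * u 2) (q 2 - ε * α * v 2)) * B 1)
          / min (p 2 - α * u 2) (q 2 - ε * α * v 2) →
      ∃ z : ℂ, ‖z‖ < 1 ∧
        (z - ∑' n : ℕ, (A (n + 2) : ℂ) * z ^ (n + 2)
          + starRingEnd ℂ (∑' n : ℕ, (B (n + 1) : ℂ) * z ^ (n + 1))) = w := by
  intro w hw
  have h1α : (0:ℝ) < 1 - α := by linarith
  have hεα : ∀ x : ℝ, 0 ≤ x → ε * α * x ≤ α * x := by
    intro x hx
    rcases hε with h | h <;> rw [h] <;> nlinarith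
  have hσ2 : 0 < p 2 - α * u 2 := by
    obtain ⟨hu0, hup⟩ := hpu 2 le_rfl
    nlinarith
  have hΓpos : ∀ n, 1 ≤ n → 0 < q n - ε * α * v n := by
    intro n hn
    obtain ⟨hv0, hvq⟩ := hqv n hn
    have := hεα (v n) hv0
    nlinarith
  set η : ℝ := min (p 2 - α * u 2) (q 2 - ε * α * v 2) with hηdef
  have hη : 0 < η := lt_min hσ2 (hΓpos 2 (by norm_num))
  have hησ : η ≤ p 2 - α * u 2 := min_le_left _ _
  have hηΓ : η ≤ q 2 - ε * α * v 2 := min_le_right _ _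
  have hσge : ∀ n : ℕ, p 2 - α * u 2 ≤ p (n + 2) - α * u (n + 2) := by
    intro n
    induction n with
    | zero => exact le_rfl
    | succ k ih => exact ih.trans (hσ (k + 2) (by omega))
  have hΓge1 : ∀ n : ℕ, q 1 - ε * α * v 1 ≤ q (n + 1) - ε * α * v (n + 1) := by
    intro n
    induction n with
    | zero => exact le_rfl
    | succ k ih => exact ih.trans (hΓ (k + 1) (by omega))
  have hΓge2 : ∀ n : ℕ, q 2 - ε * α * v 2 ≤ q (n + 2) - ε * α * v (n + 2) := by
    intro n
    induction n with
    | zero => exact le_rfl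
    | succ k ih => exact ih.trans (hΓ (k + 2) (by omega))
  -- rescaled summability
  have hsA : Summable fun n : ℕ => (p (n + 2) - α * u (n + 2)) * A (n + 2) := by
    refine (hSA.mul_right (1 - α)).congr fun n => ?_
    field_simp
  have hsB : Summable fun n : ℕ => (q (n + 1) - ε * α * v (n + 1)) * B (n + 1) := by
    refine (hSB.mul_right (1 - α)).congr fun n => ?_
    field_simp
  have ha : ∀ n : ℕ, 0 ≤ A (n + 2) := fun n => hA (n + 2) (by omega)
  have hb : ∀ n : ℕ, 0 ≤ B (n + 1) := fun n => hB (n + 1) (by omega)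
  have hsa : Summable fun n : ℕ => A (n + 2) := by
    apply Summable.of_nonneg_of_le ha _ (hsA.div_const (p 2 - α * u 2))
    intro n
    rw [le_div_iff₀ hσ2]
    nlinarith [hσge n, ha n]
  have hsb : Summable fun n : ℕ => B (n + 1) := by
    apply Summable.of_nonneg_of_le hb _ (hsB.div_const (q 1 - ε * α * v 1))
    intro n
    rw [le_div_iff₀ (hΓpos 1 le_rfl)]
    nlinarith [hΓge1 n, hb n]
  -- the master coefficient inequality, rescaled by (1 - α)
  have hsum' : (∑' n : ℕ, (p (n + 2) - α * u (n + 2)) * A (n + 2))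
      + (∑' n : ℕ, (q (n + 1) - ε * α * v (n + 1)) * B (n + 1)) ≤ 1 - α := by
    have e1 : (∑' n : ℕ, (p (n + 2) - α * u (n + 2)) / (1 - α) * A (n + 2))
        = (∑' n : ℕ, (p (n + 2) - α * u (n + 2)) * A (n + 2)) / (1 - α) := by
      rw [← tsum_div_const]
      exact tsum_congr fun n => by ring
    have e2 : (∑' n : ℕ, (q (n + 1) - ε * α * v (n + 1)) / (1 - α) * B (n + 1))
        = (∑' n : ℕ, (q (n + 1) - ε * α * v (n + 1)) * B (n + 1)) / (1 - α) := by
      rw [← tsum_div_const]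
      exact tsum_congr fun n => by ring
    rw [e1, e2, ← add_div, div_le_one h1α] at hsum
    linarith
  set SA : ℝ := ∑' n : ℕ, A (n + 2) with hSAdef
  set SB : ℝ := ∑' n : ℕ, B (n + 2) with hSBdef
  have hSA0 : 0 ≤ SA := tsum_nonneg ha
  have hSB0 : 0 ≤ SB := tsum_nonneg fun n => hb (n + 1)
  have hB1 : 0 ≤ B 1 := hB 1 le_rfl
  -- η * SA ≤ Σ σ A
  have hkey1 : η * SA ≤ ∑' n : ℕ, (p (n + 2) - α * u (n + 2)) * A (n + 2) := by
    rw [hSAdef, ← tsum_mul_left]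
    refine Summable.tsum_le_tsum (fun n => ?_) (hsa.mul_left η) hsA
    nlinarith [hσge n, ha n]
  -- Γ₁ B₁ + η SB ≤ Σ Γ B
  have hsB2 : Summable fun n : ℕ => (q (n + 2) - ε * α * v (n + 2)) * B (n + 2) :=
    (summable_nat_add_iff 1).mpr hsB
  have hkey2 : (q 1 - ε * α * v 1) * B 1 + η * SB
      ≤ ∑' n : ℕ, (q (n + 1) - ε * α * v (n + 1)) * B (n + 1) := by
    rw [Summable.tsum_eq_zero_add hsB]
    have h2 : η * SB ≤ ∑' n : ℕ, (q (n + 2) - ε * α * v (n + 2)) * B (n + 2) := by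
      rw [hSBdef, ← tsum_mul_left]
      refine Summable.tsum_le_tsum (fun n => ?_) ((hsb.comp_injective (add_left_injective 1)).mul_left η)
        hsB2
      nlinarith [hΓge2 n, hb (n + 1)]
    have : (q (0 + 1) - ε * α * v (0 + 1)) * B (0 + 1) = (q 1 - ε * α * v 1) * B 1 := by norm_num
    rw [this]
    linarith
  have hmaster : η * (SA + SB) + (q 1 - ε * α * v 1) * B 1 ≤ 1 - α := by
    have := hkey1
    nlinarith [hkey2, hsum']
  -- the target radius
  have hr1 : SA + SB + B 1
      + (η - 1 + α + ((q 1 - ε * α * v 1) - η) * B 1) / η ≤ 1 := by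
    rw [← mul_le_mul_iff_right₀ hη]
    have hd : η * ((η - 1 + α + ((q 1 - ε * α * v 1) - η) * B 1) / η)
        = η - 1 + α + ((q 1 - ε * α * v 1) - η) * B 1 := by
      field_simp
    nlinarith [hmaster]
  have hw0 : (0:ℝ) ≤ ‖w‖ := norm_nonneg w
  -- choose a radius ρ < 1 close enough to 1
  have hF1 : ‖w‖ < 1 - (SA + SB) * 1 ^ 2 - B 1 * 1 := by
    have := hw
    nlinarith [hr1]
  have hFc : ContinuousAt (fun x : ℝ => x - (SA + SB) * x ^ 2 - B 1 * x) 1 := by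
    fun_prop
  have hev : ∀ᶠ x in nhds (1:ℝ), ‖w‖ < x - (SA + SB) * x ^ 2 - B 1 * x :=
    hFc.eventually (lt_mem_nhds hF1)
  have hev2 : ∀ᶠ x in nhdsWithin (1:ℝ) (Set.Iio 1),
      (‖w‖ < x - (SA + SB) * x ^ 2 - B 1 * x ∧ 0 < x) ∧ x < 1 := by
    refine (((hev.and (lt_mem_nhds (by norm_num : (0:ℝ) < 1))).filter_mono
      nhdsWithin_le_nhds).and ?_)
    exact eventually_mem_nhdsWithin.mono fun x hx => hx
  obtain ⟨ρ, ⟨hgapρ, hρ0⟩, hρ1⟩ := hev2.exists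
  by_contra hcon
  push_neg at hcon
  refine TH_covering_aux (fun n => A (n + 2)) (fun n => B (n + 1)) ha hb hsa hsb w ρ hρ0 hρ1
    ?_ hcon
  show ‖w‖ + SA * ρ ^ 2 + B 1 * ρ + (∑' n : ℕ, B (n + 1 + 1)) * ρ ^ 2 < ρ
  have : (∑' n : ℕ, B (n + 1 + 1)) = SB := rfl
  rw [this]
  nlinarith [hgapρ]
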